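/- For ρ > 0, β > 0, a ≤ 0 ≤ b, and any real v, the unique minimizer over [a, b] of z ↦ ρ·|z| + (β/2)·(z − v)² equals P_{[a,b]}(S_{ρ/β}(v)), i.e., the projection onto [a,b] of the soft-thresholded value. -/

import Mathlib

noncomputable def shrink (ζ v : ℝ) : ℝ := Real.sign v * max (|v| - ζ) 0

def proj (a b w : ℝ) : ℝ := max (min w b) a

theorem proj_shrink_unique_min (ρ β a b v : ℝ)
    (hρ : 0 < ρ) (hβ : 0 < β) (ha : a ≤ 0) (hb : 0 ≤ b) :
    proj a b (shrink (ρ / β) v) ∈ Set.Icc a b ∧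
    (∀ z ∈ Set.Icc a b,
      ρ * |proj a b (shrink (ρ / β) v)| +
        β / 2 * (proj a b (shrink (ρ / β) v) - v) ^ 2
      ≤ ρ * |z| + β / 2 * (z - v) ^ 2) ∧
    (∀ z ∈ Set.Icc a b, z ≠ proj a b (shrink (ρ / β) v) →
      ρ * |proj a b (shrink (ρ / β) v)| +
        β / 2 * (proj a b (shrink (ρ / β) v) - v) ^ 2
      < ρ * |z| + β / 2 * (z - v) ^ 2) := by
  have ht : 0 < ρ / β := div_pos hρ hβ
  set t := ρ / β with htdef
  have hρt : ρ = β * t := by rw [htdef]; field_simp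
  set w := proj a b (shrink t v) with hw
  have hab : a ≤ b := ha.trans hb
  have hmem : w ∈ Set.Icc a b := by
    constructor
    · exact le_max_right _ _
    · exact max_le (min_le_right _ _) hab
  have key : ∃ g : ℝ, |g| ≤ 1 ∧ g * w = |w| ∧
      ∀ z ∈ Set.Icc a b, 0 ≤ (ρ * g + β * (w - v)) * (z - w) := by
    rcases le_or_gt (|v|) t with hA | hB
    · -- |v| ≤ t : shrink = 0, w = 0, g = v/t
      have hsh : shrink t v = 0 := by
        simp [shrink, max_eq_right (by linarith : |v| - t ≤ 0)]
      have hw0 : w = 0 := by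
        rw [hw, hsh]
        simp [proj, min_eq_left hb, max_eq_left ha]
      refine ⟨v / t, ?_, by simp [hw0], ?_⟩
      · rw [abs_div, abs_of_pos ht]
        exact (div_le_one ht).mpr hA
      · have hzero : ρ * (v / t) + β * (w - v) = 0 := by
          rw [hw0, hρt]
          field_simp; ring
        intro z _
        rw [hzero, zero_mul]
    · rcases lt_abs.mp hB with h | h
      · -- t < v
        have hv0 : 0 < v := ht.trans h
        have hsh : shrink t v = v - t := by
          rw [shrink, Real.sign_of_pos hv0, abs_of_pos hv0,
            max_eq_left (by linarith : (0:ℝ) ≤ v - t), one_mul]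
        have hmin : (0:ℝ) ≤ min (v - t) b := le_min (by linarith) hb
        have hww : w = min (v - t) b := by
          rw [hw, hsh, proj, max_eq_left (ha.trans hmin)]
        have hwnn : 0 ≤ w := hww ▸ hmin
        refine ⟨1, by norm_num, by rw [one_mul, abs_of_nonneg hwnn], ?_⟩
        intro z hz
        rcases le_total (v - t) b with hcase | hcase
        · have hwe : w = v - t := by rw [hww, min_eq_left hcase]
          have : ρ * 1 + β * (w - v) = 0 := by rw [hwe, hρt]; ring
          rw [this, zero_mul]
        · have hwe : w = b := by rw [hww, min_eq_right hcase]
          have h1 : ρ * 1 + β * (w - v) ≤ 0 := by rw [hwe, hρt]; nlinarith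
          have h2 : z - w ≤ 0 := by rw [hwe]; linarith [hz.2]
          nlinarith [mul_nonneg (neg_nonneg.mpr h1) (neg_nonneg.mpr h2)]
      · -- v < -t
        have hv0 : v < 0 := by linarith
        have hsh : shrink t v = v + t := by
          rw [shrink, Real.sign_of_neg hv0, abs_of_neg hv0,
            max_eq_left (by linarith : (0:ℝ) ≤ -v - t)]
          ring
        have hmin : min (v + t) b = v + t := min_eq_left (by linarith)
        have hww : w = max (v + t) a := by rw [hw, hsh, proj, hmin]
        have hwnp : w ≤ 0 := hww ▸ max_le (by linarith) ha
        refine ⟨-1, by norm_num, by rw [abs_of_nonpos hwnp]; ring, ?_⟩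
        intro z hz
        rcases le_total a (v + t) with hcase | hcase
        · have hwe : w = v + t := by rw [hww, max_eq_left hcase]
          have : ρ * (-1) + β * (w - v) = 0 := by rw [hwe, hρt]; ring
          rw [this, zero_mul]
        · have hwe : w = a := by rw [hww, max_eq_right hcase]
          have h1 : 0 ≤ ρ * (-1) + β * (w - v) := by rw [hwe, hρt]; nlinarith
          have h2 : 0 ≤ z - w := by rw [hwe]; linarith [hz.1]
          exact mul_nonneg h1 h2
  obtain ⟨g, hg1, hg2, hg3⟩ := key
  have strict : ∀ z ∈ Set.Icc a b, z ≠ w →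
      ρ * |w| + β / 2 * (w - v) ^ 2 < ρ * |z| + β / 2 * (z - v) ^ 2 := by
    intro z hz hne
    have h1 : g * z ≤ |z| := by
      calc g * z ≤ |g * z| := le_abs_self _
        _ = |g| * |z| := abs_mul _ _
        _ ≤ 1 * |z| := by
            exact mul_le_mul_of_nonneg_right hg1 (abs_nonneg _)
        _ = |z| := one_mul _
    have h4 := hg3 z hz
    have hzw : z - w ≠ 0 := sub_ne_zero.mpr hne
    have h5 : 0 < (z - w) ^ 2 := by positivity
    have h6 : ρ * (g * z) ≤ ρ * |z| := mul_le_mul_of_nonneg_left h1 hρ.le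
    nlinarith [mul_pos hβ h5]
  exact ⟨hmem, fun z hz => by
    rcases eq_or_ne z w with rfl | hne
    · exact le_refl _
    · exact (strict z hz hne).le, strict⟩
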